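/- Let q ≥ 2 and n ≥ 1, and set r = ⌊(q−1)(n−1)/q⌋ + 1. Then the number of sequences in Σ_q^n having at most r runs equals q·Σ_{i=0}^{r−1} C(n−1, i)·(q−1)^i, and this quantity is at least q^{n−1}. -/

import Mathlib

/-- Number of runs of a sequence. -/
def nRuns {α : Type*} [DecidableEq α] (x : List α) : ℕ :=
  (x.destutter (· ≠ ·)).length



def countAdj {α : Type*} [DecidableEq α] : List α → ℕ
  | [] => 0
  | [_] => 0
  | a :: b :: t => (if a ≠ b then 1 else 0) + countAdj (b :: t)

theorem destutter'_len {α : Type*} [DecidableEq α] :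
    ∀ (l : List α) (a), (List.destutter' (· ≠ ·) a l).length = 1 + countAdj (a :: l)
  | [], a => by simp [List.destutter', countAdj]
  | b :: t, a => by
    by_cases h : a = b
    · subst h
      rw [List.destutter'_cons_neg _ (by simp)]
      show _ = 1 + ((if a ≠ a then 1 else 0) + countAdj (a :: t))
      rw [if_neg (by simp), destutter'_len t a]
      omega
    · rw [List.destutter'_cons_pos _ h]
      show _ + 1 = 1 + ((if a ≠ b then 1 else 0) + countAdj (b :: t))
      rw [if_pos h, destutter'_len t b]
      omega

theorem nRuns_cons {α : Type*} [DecidableEq α] (a : α) (l : List α) :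
    nRuns (a :: l) = 1 + countAdj (a :: l) := destutter'_len l a

theorem countAdj_ofFn {α : Type*} [DecidableEq α] :
    ∀ (m : ℕ) (v : Fin (m + 1) → α),
      countAdj (List.ofFn v) =
        (Finset.univ.filter (fun j : Fin m => v j.succ ≠ v j.castSucc)).card
  | 0, v => by simp [List.ofFn_succ, countAdj]
  | m + 1, v => by
    have h2 : List.ofFn (fun i : Fin (m+1) => v i.succ)
        = v 1 :: List.ofFn (fun i : Fin m => v i.succ.succ) := by
      rw [List.ofFn_succ]
      rfl
    have h1 : List.ofFn v = v 0 :: v 1 :: List.ofFn (fun i : Fin m => v i.succ.succ) := by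
      rw [List.ofFn_succ, ← h2]
    rw [h1, show countAdj (v 0 :: v 1 :: List.ofFn (fun i : Fin m => v i.succ.succ))
        = (if v 0 ≠ v 1 then 1 else 0) + countAdj (v 1 :: List.ofFn (fun i : Fin m => v i.succ.succ)) from rfl,
      ← h2, countAdj_ofFn m (fun i : Fin (m+1) => v i.succ)]
    rw [Finset.card_filter, Finset.card_filter, Fin.sum_univ_succ]
    simp only [Fin.succ_castSucc, Fin.succ_zero_eq_one, Fin.castSucc_zero]
    congr 1
    by_cases h : v 0 = v 1 <;> simp [h, ne_comm]

theorem nRuns_ofFn {α : Type*} [DecidableEq α] (m : ℕ) (v : Fin (m + 1) → α) :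
    nRuns (List.ofFn v) =
      1 + (Finset.univ.filter (fun j : Fin m => v j.succ ≠ v j.castSucc)).card := by
  rw [List.ofFn_succ, nRuns_cons, ← List.ofFn_succ, countAdj_ofFn]

section
variable {q m : ℕ} [NeZero q]

/-- difference sequence -/
def Dv (v : Fin (m + 1) → Fin q) : Fin m → Fin q :=
  fun j => v j.succ - v j.castSucc

/-- partial sums -/
def Sv (a : Fin q) (d : Fin m → Fin q) : Fin (m + 1) → Fin q :=
  fun i => a + ∑ j : Fin m, if (j : ℕ) < (i : ℕ) then d j else 0

theorem Sv_zero (a : Fin q) (d : Fin m → Fin q) : Sv a d 0 = a := by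
  simp [Sv]

theorem sum_step (d : Fin m → Fin q) (i : Fin m) :
    (∑ j : Fin m, if (j : ℕ) < (i : ℕ) + 1 then d j else 0)
      = (∑ j : Fin m, if (j : ℕ) < (i : ℕ) then d j else 0) + d i := by
  have h : ∀ j : Fin m, (if (j : ℕ) < (i : ℕ) + 1 then d j else 0)
      = (if (j : ℕ) < (i : ℕ) then d j else 0) + (if j = i then d j else 0) := by
    intro j
    rcases Nat.lt_trichotomy (j : ℕ) (i : ℕ) with h | h | h
    · rw [if_pos (by omega), if_pos h, if_neg (by intro e; subst e; omega), add_zero]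
    · rw [if_pos (by omega), if_neg (by omega), if_pos (Fin.ext h), zero_add]
    · rw [if_neg (by omega), if_neg (by omega), if_neg (by intro e; subst e; omega), add_zero]
  rw [Finset.sum_congr rfl (fun j _ => h j), Finset.sum_add_distrib,
    Finset.sum_ite_eq' Finset.univ i d, if_pos (Finset.mem_univ i)]

theorem Sv_succ (a : Fin q) (d : Fin m → Fin q) (i : Fin m) :
    Sv a d i.succ = Sv a d i.castSucc + d i := by
  simp only [Sv, Fin.val_succ, Fin.coe_castSucc, sum_step, add_assoc]

theorem Dv_Sv (a : Fin q) (d : Fin m → Fin q) : Dv (Sv a d) = d := by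
  funext j
  simp [Dv, Sv_succ]

theorem Sv_Dv (v : Fin (m + 1) → Fin q) : Sv (v 0) (Dv v) = v := by
  funext i
  induction i using Fin.induction with
  | zero => exact Sv_zero _ _
  | succ i ih =>
      rw [Sv_succ, ih]
      simp [Dv]

theorem Sv_inj {a a' : Fin q} {d d' : Fin m → Fin q} (h : Sv a d = Sv a' d') :
    a = a' ∧ d = d' := by
  constructor
  · rw [← Sv_zero a d, ← Sv_zero a' d', h]
  · rw [← Dv_Sv a d, ← Dv_Sv a' d', h]

theorem Sv_adj_ne (a : Fin q) (d : Fin m → Fin q) (j : Fin m) :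
    Sv a d j.succ ≠ Sv a d j.castSucc ↔ d j ≠ 0 := by
  rw [Sv_succ]
  constructor
  · intro h h0; rw [h0, add_zero] at h; exact h rfl
  · intro h h0; exact h (by rwa [add_eq_left] at h0)

theorem Dv_ne (v : Fin (m + 1) → Fin q) (j : Fin m) :
    Dv v j ≠ 0 ↔ v j.succ ≠ v j.castSucc := by
  simp [Dv, sub_eq_zero]


def wtF (d : Fin m → Fin q) : ℕ := (Finset.univ.filter (fun j => d j ≠ 0)).card

def suppF (d : Fin m → Fin q) : Finset (Fin m) := Finset.univ.filter (fun j => d j ≠ 0)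

theorem card_supp_fiber (s : Finset (Fin m)) :
    (Finset.univ.filter (fun d : Fin m → Fin q => suppF d = s)).card = (q - 1) ^ s.card := by
  rw [← Fintype.card_subtype]
  have e : {d : Fin m → Fin q // suppF d = s} ≃ (∀ _ : s, {x : Fin q // x ≠ 0}) :=
    { toFun := fun d j => ⟨d.1 j, by
        have hj : (j : Fin m) ∈ suppF d.1 := by rw [d.2]; exact j.2
        exact (Finset.mem_filter.mp hj).2⟩
      invFun := fun f => ⟨fun j => if h : j ∈ s then (f ⟨j, h⟩).1 else 0, by
        ext j
        simp only [suppF, Finset.mem_filter, Finset.mem_univ, true_and]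
        by_cases h : j ∈ s
        · simp [h, (f ⟨j, h⟩).2]
        · simp [h]⟩
      left_inv := fun d => Subtype.ext (funext fun j => by
        dsimp only
        by_cases h : j ∈ s
        · rw [dif_pos h]
        · rw [dif_neg h]
          have hj : j ∉ suppF d.1 := by rw [d.2]; exact h
          simp only [suppF, Finset.mem_filter, Finset.mem_univ, true_and, not_not] at hj
          exact hj.symm)
      right_inv := fun f => funext fun j => Subtype.ext (dif_pos j.2) }
  rw [Fintype.card_congr e, Fintype.card_pi]
  have hq : Fintype.card {x : Fin q // x ≠ 0} = q - 1 := by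
    rw [Fintype.card_subtype_compl, Fintype.card_subtype_eq, Fintype.card_fin]
  simp [hq, Finset.prod_const]

theorem card_wt_eq (i : ℕ) :
    (Finset.univ.filter (fun d : Fin m → Fin q => wtF d = i)).card
      = Nat.choose m i * (q - 1) ^ i := by
  rw [Finset.card_eq_sum_card_fiberwise
    (f := suppF) (t := Finset.powersetCard i Finset.univ)
    (fun d hd => by
      rw [Finset.mem_coe, Finset.mem_powersetCard]
      exact ⟨Finset.subset_univ _, (Finset.mem_filter.mp hd).2⟩)]
  have : ∀ s ∈ Finset.powersetCard i (Finset.univ : Finset (Fin m)),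
      ((Finset.univ.filter (fun d : Fin m → Fin q => wtF d = i)).filter
        (fun d => suppF d = s)).card = (q - 1) ^ i := by
    intro s hs
    have hsc : s.card = i := (Finset.mem_powersetCard.mp hs).2
    rw [show ((Finset.univ.filter (fun d : Fin m → Fin q => wtF d = i)).filter
        (fun d => suppF d = s)) = Finset.univ.filter (fun d : Fin m → Fin q => suppF d = s) by
      ext d
      simp only [Finset.filter_filter, Finset.mem_filter, Finset.mem_univ, true_and]
      constructor
      · exact fun h => h.2
      · intro h
        exact ⟨by rw [wtF, ← suppF, h, hsc], h⟩]
    rw [card_supp_fiber, hsc]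
  rw [Finset.sum_congr rfl this, Finset.sum_const, Finset.card_powersetCard,
    Finset.card_univ, Fintype.card_fin, smul_eq_mul]

theorem card_wt_le (k : ℕ) :
    (Finset.univ.filter (fun d : Fin m → Fin q => wtF d ≤ k)).card
      = ∑ i ∈ Finset.range (k + 1), Nat.choose m i * (q - 1) ^ i := by
  rw [Finset.card_eq_sum_card_fiberwise (f := wtF) (t := Finset.range (k + 1))
    (fun d hd => Finset.mem_range.mpr (Nat.lt_succ_of_le (Finset.mem_filter.mp hd).2))]
  apply Finset.sum_congr rfl
  intro i hi
  rw [show ((Finset.univ.filter (fun d : Fin m → Fin q => wtF d ≤ k)).filter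
      (fun d => wtF d = i)) = Finset.univ.filter (fun d : Fin m → Fin q => wtF d = i) by
    ext d
    simp only [Finset.filter_filter, Finset.mem_filter, Finset.mem_univ, true_and]
    constructor
    · exact fun h => h.2
    · exact fun h => ⟨h ▸ Nat.lt_succ_iff.mp (Finset.mem_range.mp hi), h⟩]
  exact card_wt_eq i


theorem pigeon (hq : 2 ≤ q) (d : Fin m → Fin q) :
    ∃ y : Fin q, m - (q - 1) * m / q ≤ (Finset.univ.filter (fun j => d j = y)).card := by
  by_contra hcon
  push_neg at hcon
  have hm : m = ∑ y : Fin q, (Finset.univ.filter (fun j => d j = y)).card := by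
    rw [← Finset.card_eq_sum_card_fiberwise (fun j _ => Finset.mem_univ (d j)),
      Finset.card_univ, Fintype.card_fin]
  set t := (q - 1) * m / q with ht
  set s := (q - 1) * m % q with hs
  have h1 : q * t + s = (q - 1) * m := Nat.div_add_mod ((q - 1) * m) q
  have h2 : s < q := Nat.mod_lt _ (by omega)
  have h3 : (q - 1) * m + m = q * m := by
    have : q - 1 + 1 = q := by omega
    calc (q - 1) * m + m = ((q - 1) + 1) * m := by ring
    _ = q * m := by rw [this]
  have h4 : t ≤ m := by
    have : q * t ≤ q * m := by omega
    exact Nat.le_of_mul_le_mul_left this (by omega)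
  -- every count ≤ m - t - 1
  have hsum : ∑ y : Fin q, (Finset.univ.filter (fun j => d j = y)).card
      ≤ q * (m - t - 1) := by
    calc ∑ y : Fin q, (Finset.univ.filter (fun j => d j = y)).card
        ≤ ∑ _y : Fin q, (m - t - 1) := Finset.sum_le_sum (fun y _ => by
          have := hcon y; omega)
      _ = q * (m - t - 1) := by rw [Finset.sum_const, Finset.card_univ, Fintype.card_fin,
          smul_eq_mul]
  -- but q * (m - t - 1) < m
  have h8 : 1 ≤ m - t := by
    have := hcon ⟨0, by omega⟩
    omega
  have e1 : q * (m - t) = q * (m - t - 1) + q := by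
    nth_rewrite 1 [show m - t = (m - t - 1) + 1 by omega]
    rw [Nat.mul_add, mul_one]
  have e2 : q * (m - t) + q * t = q * m := by
    rw [← Nat.mul_add, show m - t + t = m by omega]
  omega


theorem exists_translate (hq : 2 ≤ q) (d : Fin m → Fin q) :
    ∃ c : Fin q, wtF (fun j => d j + c) ≤ (q - 1) * m / q := by
  obtain ⟨y, hy⟩ := pigeon hq d
  refine ⟨-y, ?_⟩
  have hzero : (Finset.univ.filter (fun j => d j + -y = 0)) =
      (Finset.univ.filter (fun j => d j = y)) := by
    ext j
    simp [sub_eq_zero, ← sub_eq_add_neg]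
  have hsplit := Finset.card_filter_add_card_filter_not
    (s := (Finset.univ : Finset (Fin m))) (p := fun j => d j + -y = 0)
  rw [Finset.card_univ, Fintype.card_fin] at hsplit
  have htm : (q - 1) * m / q ≤ m := by
    have h1 : (q - 1) * m ≤ q * m := Nat.mul_le_mul_right m (by omega)
    calc (q - 1) * m / q ≤ q * m / q := Nat.div_le_div_right h1
      _ = m := by rw [Nat.mul_div_cancel_left m (by omega : 0 < q)]
  rw [wtF]
  simp only [ne_eq]
  rw [← hzero] at hy
  omega

theorem orbit_bound (hq : 2 ≤ q) :
    q ^ m ≤ q * (Finset.univ.filter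
      (fun d : Fin m → Fin q => wtF d ≤ (q - 1) * m / q)).card := by
  set t := (q - 1) * m / q with ht
  set Good := Finset.univ.filter (fun d : Fin m → Fin q => wtF d ≤ t) with hG
  have hsub : (Finset.univ : Finset (Fin m → Fin q)) ⊆
      Finset.univ.biUnion (fun c : Fin q =>
        Finset.univ.filter (fun d : Fin m → Fin q => wtF (fun j => d j + c) ≤ t)) := by
    intro d _
    rw [Finset.mem_biUnion]
    obtain ⟨c, hc⟩ := exists_translate hq d
    exact ⟨c, Finset.mem_univ c, Finset.mem_filter.mpr ⟨Finset.mem_univ d, hc⟩⟩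
  have hcards : ∀ c : Fin q,
      (Finset.univ.filter (fun d : Fin m → Fin q => wtF (fun j => d j + c) ≤ t)).card
        = Good.card := by
    intro c
    apply Finset.card_bij' (i := fun d _ => fun j => d j + c) (j := fun d _ => fun j => d j - c)
    · intro d hd
      rw [Finset.mem_filter] at hd ⊢
      exact ⟨Finset.mem_univ _, hd.2⟩
    · intro d hd
      rw [Finset.mem_filter] at hd ⊢
      refine ⟨Finset.mem_univ _, ?_⟩
      have : (fun j => d j - c + c) = d := by funext j; rw [sub_add_cancel]
      rw [this]
      exact hd.2
    · intro d _; funext j; rw [add_sub_cancel_right]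
    · intro d _; funext j; rw [sub_add_cancel]
  calc q ^ m = (Finset.univ : Finset (Fin m → Fin q)).card := by
        rw [Finset.card_univ, Fintype.card_fun]; simp
    _ ≤ (Finset.univ.biUnion (fun c : Fin q =>
        Finset.univ.filter (fun d : Fin m → Fin q => wtF (fun j => d j + c) ≤ t))).card :=
        Finset.card_le_card hsub
    _ ≤ ∑ c : Fin q, (Finset.univ.filter
        (fun d : Fin m → Fin q => wtF (fun j => d j + c) ≤ t)).card := Finset.card_biUnion_le
    _ = ∑ _c : Fin q, Good.card := by rw [Finset.sum_congr rfl (fun c _ => hcards c)]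
    _ = q * Good.card := by rw [Finset.sum_const, Finset.card_univ, Fintype.card_fin,
        smul_eq_mul]


theorem ofFn_get_cast {α : Type*} (l : List α) (k : ℕ) (h : l.length = k) :
    List.ofFn (fun i : Fin k => l.get (Fin.cast h.symm i)) = l := by
  subst h
  simp only [Fin.cast_refl]
  exact List.ofFn_get l

theorem nRuns_Sv (a : Fin q) (d : Fin m → Fin q) :
    nRuns (List.ofFn (Sv a d)) = 1 + wtF d := by
  rw [nRuns_ofFn]
  congr 1
  rw [wtF]
  congr 1
  apply Finset.filter_congr
  intro j _
  exact Sv_adj_ne a d j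

theorem main_card (t : ℕ) :
    Nat.card {x : List (Fin q) | x.length = m + 1 ∧ nRuns x ≤ t + 1}
      = q * (Finset.univ.filter (fun d : Fin m → Fin q => wtF d ≤ t)).card := by
  have hbij : Function.Bijective
      (fun p : {p : Fin q × (Fin m → Fin q) // wtF p.2 ≤ t} =>
        (⟨List.ofFn (Sv p.1.1 p.1.2), by
          constructor
          · simp
          · rw [nRuns_Sv]; omega⟩ :
          {x : List (Fin q) | x.length = m + 1 ∧ nRuns x ≤ t + 1})) := by
    constructor
    · rintro ⟨⟨a, d⟩, hp⟩ ⟨⟨a', d'⟩, hp'⟩ h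
      have h2 : List.ofFn (Sv a d) = List.ofFn (Sv a' d') := congrArg Subtype.val h
      have h3 : Sv a d = Sv a' d' := by
        have := List.ofFn_injective h2
        exact this
      have h4 : a = a' := by rw [← Sv_zero a d, ← Sv_zero a' d', h3]
      have h5 : d = d' := by rw [← Dv_Sv a d, ← Dv_Sv a' d', h3]
      simp [h4, h5]
    · rintro ⟨x, hx⟩
      obtain ⟨hlen, hruns⟩ := hx
      set v : Fin (m + 1) → Fin q := fun i => x.get (Fin.cast hlen.symm i) with hv
      have hofn : List.ofFn v = x := ofFn_get_cast x (m + 1) hlen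
      have hwt : wtF (Dv v) ≤ t := by
        have h1 : nRuns x ≤ t + 1 := hruns
        rw [← hofn, ← Sv_Dv v, nRuns_Sv] at h1
        omega
      refine ⟨⟨(v 0, Dv v), hwt⟩, ?_⟩
      apply Subtype.ext
      show List.ofFn (Sv (v 0) (Dv v)) = x
      rw [Sv_Dv, hofn]
  have h1 : Nat.card {x : List (Fin q) | x.length = m + 1 ∧ nRuns x ≤ t + 1}
      = Nat.card {p : Fin q × (Fin m → Fin q) // wtF p.2 ≤ t} :=
    (Nat.card_eq_of_bijective _ hbij).symm
  rw [h1, Nat.card_eq_fintype_card]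
  have e : {p : Fin q × (Fin m → Fin q) // wtF p.2 ≤ t}
      ≃ Fin q × {d : Fin m → Fin q // wtF d ≤ t} :=
    { toFun := fun p => (p.1.1, ⟨p.1.2, p.2⟩)
      invFun := fun x => ⟨(x.1, x.2.1), x.2.2⟩
      left_inv := fun _ => rfl
      right_inv := fun _ => rfl }
  rw [Fintype.card_congr e, Fintype.card_prod, Fintype.card_fin, Fintype.card_subtype]

end

theorem stmt_13 (q n : ℕ) (hq : 2 ≤ q) (hn : 1 ≤ n) :
    {x : List (Fin q) | x.length = n ∧ nRuns x ≤ (q - 1) * (n - 1) / q + 1}.ncard =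
      q * ∑ i ∈ Finset.range ((q - 1) * (n - 1) / q + 1),
        Nat.choose (n - 1) i * (q - 1) ^ i ∧
    q ^ (n - 1) ≤
      q * ∑ i ∈ Finset.range ((q - 1) * (n - 1) / q + 1),
        Nat.choose (n - 1) i * (q - 1) ^ i := by
  haveI : NeZero q := ⟨by omega⟩
  obtain ⟨m, rfl⟩ : ∃ m, n = m + 1 := ⟨n - 1, by omega⟩
  simp only [Nat.add_sub_cancel]
  set t := (q - 1) * m / q with ht
  have hcard : {x : List (Fin q) | x.length = m + 1 ∧ nRuns x ≤ t + 1}.ncard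
      = q * ∑ i ∈ Finset.range (t + 1), Nat.choose m i * (q - 1) ^ i := by
    rw [← Nat.card_coe_set_eq, main_card t, card_wt_le t]
  refine ⟨hcard, ?_⟩
  rw [← card_wt_le t]
  exact orbit_bound hq
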